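/- Let S ⊆ {(1,-1), (-1,1), (1,0), (0,1), (1,1)} be a step set containing (1,-1) and (-1,1) (one of the five genus-zero step sets), with positive real weights d_v (v ∈ S) and Boltzmann weights a, b > 0; set d_{i,j} = 0 for (i,j) ∉ S, A = 1 − 1/a, B = 1 − 1/b. Then the generating function Q(x,y) of weighted quadrant walks with interacting boundaries satisfies, as an identity of formal power series in t with coefficients in ℝ[x,y]: (x·y − t·(d_{1,-1}·x² + d_{-1,1}·y² + d_{1,0}·x²y + d_{0,1}·xy² + d_{1,1}·x²y²))·Q(x,y) = (1 − A − B)·x·y + (A·x·y − t·d_{1,-1}·x²)·Q(x,0) + (B·x·y − t·d_{-1,1}·y²)·Q(0,y). (In particular, for these step sets Q(0,0) = 1.) -/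

import Mathlib

/-!
Statement 2: For any of the five genus-zero step sets (a subset of
{(1,-1), (-1,1), (1,0), (0,1), (1,1)} containing (1,-1) and (-1,1)), the generating
function Q(x,y) of weighted quadrant walks with interacting boundaries satisfies the
kernel functional equation relating Q(x,y), Q(x,0) and Q(0,y), as an identity of
formal power series in t with coefficients in ℝ[x,y].
-/

open scoped Classical

noncomputable section

namespace Stmt2

/-- Position of the walk after steps `v 0, …, v i` (partial sum of the first `i+1` steps). -/
def psum {n : ℕ} (v : Fin n → ℤ × ℤ) (i : Fin n) : ℤ × ℤ :=
  ∑ j ∈ Finset.univ.filter (fun j => j ≤ i), v j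

/-- Quadrant walks of length `n` with all steps in `S`. -/
def quadWalks (S : Finset (ℤ × ℤ)) (n : ℕ) : Finset (Fin n → ℤ × ℤ) :=
  (Fintype.piFinset fun _ => S).filter fun v =>
    ∀ i : Fin n, 0 ≤ (psum v i).1 ∧ 0 ≤ (psum v i).2

/-- The weight of a walk. -/
def wt {n : ℕ} (d : ℤ × ℤ → ℝ) (a b : ℝ) (v : Fin n → ℤ × ℤ) : ℝ :=
  (∏ i, d (v i)) *
    a ^ (Finset.univ.filter fun i => (psum v i).2 = 0).card *
    b ^ (Finset.univ.filter fun i => (psum v i).1 = 0).card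

/-- Endpoint of a walk. -/
def endpt {n : ℕ} (v : Fin n → ℤ × ℤ) : ℤ × ℤ := ∑ j, v j

/-- `Q(x,y)` as a power series in `t` with coefficients in `ℝ[x,y]`
(`x = MvPolynomial.X 0`, `y = MvPolynomial.X 1`). -/
def Q (S : Finset (ℤ × ℤ)) (d : ℤ × ℤ → ℝ) (a b : ℝ) :
    PowerSeries (MvPolynomial (Fin 2) ℝ) :=
  PowerSeries.mk fun n =>
    ∑ v ∈ quadWalks S n,
      MvPolynomial.C (wt d a b v) * MvPolynomial.X 0 ^ (endpt v).1.toNat *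
        MvPolynomial.X 1 ^ (endpt v).2.toNat

/-- `Q(x,0)`: the restriction of the sum to walks ending on the x-axis. -/
def Qx0 (S : Finset (ℤ × ℤ)) (d : ℤ × ℤ → ℝ) (a b : ℝ) :
    PowerSeries (MvPolynomial (Fin 2) ℝ) :=
  PowerSeries.mk fun n =>
    ∑ v ∈ (quadWalks S n).filter (fun v => (endpt v).2 = 0),
      MvPolynomial.C (wt d a b v) * MvPolynomial.X 0 ^ (endpt v).1.toNat

/-- `Q(0,y)`: the restriction of the sum to walks ending on the y-axis. -/
def Qy0 (S : Finset (ℤ × ℤ)) (d : ℤ × ℤ → ℝ) (a b : ℝ) :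
    PowerSeries (MvPolynomial (Fin 2) ℝ) :=
  PowerSeries.mk fun n =>
    ∑ v ∈ (quadWalks S n).filter (fun v => (endpt v).1 = 0),
      MvPolynomial.C (wt d a b v) * MvPolynomial.X 1 ^ (endpt v).2.toNat

/-- Constant (real) coefficient, viewed in `(ℝ[x,y])[[t]]`. -/
abbrev CC (r : ℝ) : PowerSeries (MvPolynomial (Fin 2) ℝ) :=
  PowerSeries.C (MvPolynomial.C r)

/-- The variable `x`, viewed in `(ℝ[x,y])[[t]]`. -/
abbrev Xv : PowerSeries (MvPolynomial (Fin 2) ℝ) :=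
  PowerSeries.C (MvPolynomial.X 0)

/-- The variable `y`, viewed in `(ℝ[x,y])[[t]]`. -/
abbrev Yv : PowerSeries (MvPolynomial (Fin 2) ℝ) :=
  PowerSeries.C (MvPolynomial.X 1)

/-- The length variable `t`. -/
abbrev T : PowerSeries (MvPolynomial (Fin 2) ℝ) := PowerSeries.X


open MvPolynomial in
lemma psum_eq {n : ℕ} (v : Fin n → ℤ × ℤ) (i : Fin n) :
    psum v i = ∑ j, if j ≤ i then v j else 0 := by
  rw [psum, Finset.sum_filter]

lemma psum_snoc_castSucc {n : ℕ} (v : Fin n → ℤ × ℤ) (s : ℤ × ℤ) (j : Fin n) :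
    psum (Fin.snoc v s) j.castSucc = psum v j := by
  rw [psum_eq, psum_eq, Fin.sum_univ_castSucc]
  simp [Fin.castSucc_le_castSucc_iff, (Fin.castSucc_lt_last j).not_ge]

lemma psum_snoc_last {n : ℕ} (v : Fin n → ℤ × ℤ) (s : ℤ × ℤ) :
    psum (Fin.snoc v s) (Fin.last n) = endpt v + s := by
  rw [psum_eq, endpt, Fin.sum_univ_castSucc]
  simp [Fin.le_last]

lemma endpt_snoc {n : ℕ} (v : Fin n → ℤ × ℤ) (s : ℤ × ℤ) :
    endpt (Fin.snoc v s) = endpt v + s := by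
  rw [endpt, endpt, Fin.sum_univ_castSucc]; simp

lemma psum_last {n : ℕ} (v : Fin (n + 1) → ℤ × ℤ) :
    psum v (Fin.last n) = endpt v := by
  rw [psum_eq, endpt]; simp [Fin.le_last]

lemma endpt_nonneg {S : Finset (ℤ × ℤ)} {n : ℕ} {v : Fin n → ℤ × ℤ}
    (hv : v ∈ quadWalks S n) : 0 ≤ (endpt v).1 ∧ 0 ≤ (endpt v).2 := by
  cases n with
  | zero => simp [endpt]
  | succ m =>
    rw [← psum_last]
    exact ((Finset.mem_filter.mp hv).2 (Fin.last m))

lemma mem_quadWalks_snoc {S : Finset (ℤ × ℤ)} {n : ℕ} (v : Fin n → ℤ × ℤ) (s : ℤ × ℤ) :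
    Fin.snoc v s ∈ quadWalks S (n + 1) ↔
      v ∈ quadWalks S n ∧ s ∈ S ∧ 0 ≤ (endpt v + s).1 ∧ 0 ≤ (endpt v + s).2 := by
  simp only [quadWalks, Finset.mem_filter, Fintype.mem_piFinset]
  constructor
  · rintro ⟨h1, h2⟩
    refine ⟨⟨fun i => by simpa using h1 i.castSucc, fun i => by
      have := h2 i.castSucc; rwa [psum_snoc_castSucc] at this⟩, by simpa using h1 (Fin.last n), ?_, ?_⟩
    · have := h2 (Fin.last n); rw [psum_snoc_last] at this; exact this.1
    · have := h2 (Fin.last n); rw [psum_snoc_last] at this; exact this.2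
  · rintro ⟨⟨h1, h2⟩, hs, h3, h4⟩
    refine ⟨fun i => ?_, fun i => ?_⟩
    · induction i using Fin.lastCases with
      | last => simpa using hs
      | cast j => simpa using h1 j
    · induction i using Fin.lastCases with
      | last => rw [psum_snoc_last]; exact ⟨h3, h4⟩
      | cast j => rw [psum_snoc_castSucc]; exact h2 j

lemma card_snoc_snd {n : ℕ} (v : Fin n → ℤ × ℤ) (s : ℤ × ℤ) :
    (Finset.univ.filter fun i => (psum (Fin.snoc v s) i).2 = 0).card
      = (Finset.univ.filter fun i => (psum v i).2 = 0).card
        + if (endpt v + s).2 = 0 then 1 else 0 := by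
  rw [Finset.card_filter, Finset.card_filter, Fin.sum_univ_castSucc]
  simp [psum_snoc_castSucc, psum_snoc_last]

lemma card_snoc_fst {n : ℕ} (v : Fin n → ℤ × ℤ) (s : ℤ × ℤ) :
    (Finset.univ.filter fun i => (psum (Fin.snoc v s) i).1 = 0).card
      = (Finset.univ.filter fun i => (psum v i).1 = 0).card
        + if (endpt v + s).1 = 0 then 1 else 0 := by
  rw [Finset.card_filter, Finset.card_filter, Fin.sum_univ_castSucc]
  simp [psum_snoc_castSucc, psum_snoc_last]

lemma wt_snoc {n : ℕ} (d : ℤ × ℤ → ℝ) (a b : ℝ) (v : Fin n → ℤ × ℤ) (s : ℤ × ℤ) :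
    wt d a b (Fin.snoc v s) = wt d a b v * d s *
      (if (endpt v + s).2 = 0 then a else 1) * (if (endpt v + s).1 = 0 then b else 1) := by
  rw [wt, wt, Fin.prod_univ_castSucc, card_snoc_snd, card_snoc_fst, pow_add, pow_add]
  simp only [Fin.snoc_castSucc, Fin.snoc_last]
  split_ifs <;> ring

/-- Valid (walk, step) pairs of total length `n + 1`. -/
def pairs (S : Finset (ℤ × ℤ)) (n : ℕ) : Finset ((Fin n → ℤ × ℤ) × (ℤ × ℤ)) :=
  ((quadWalks S n) ×ˢ S).filter fun p => 0 ≤ (endpt p.1 + p.2).1 ∧ 0 ≤ (endpt p.1 + p.2).2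

lemma sum_snoc_decomp {S : Finset (ℤ × ℤ)} {n : ℕ} {M : Type*} [AddCommMonoid M]
    (f : (Fin (n + 1) → ℤ × ℤ) → M) :
    ∑ v ∈ quadWalks S (n + 1), f v = ∑ p ∈ pairs S n, f (Fin.snoc p.1 p.2) := by
  refine Finset.sum_nbij' (fun v => (Fin.init v, v (Fin.last n)))
    (fun p => Fin.snoc p.1 p.2) ?_ ?_ ?_ ?_ ?_
  · intro v hv
    rw [← Fin.snoc_init_self v] at hv
    rw [mem_quadWalks_snoc] at hv
    simp only [pairs, Finset.mem_filter, Finset.mem_product]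
    exact ⟨⟨hv.1, hv.2.1⟩, hv.2.2⟩
  · intro p hp
    simp only [pairs, Finset.mem_filter, Finset.mem_product] at hp
    rw [mem_quadWalks_snoc]
    exact ⟨hp.1.1, hp.1.2, hp.2⟩
  · intro v _; exact Fin.snoc_init_self v
  · intro p _; simp
  · intro v _; rw [← Fin.snoc_init_self v]; simp

lemma endpt_ne_zero {S : Finset (ℤ × ℤ)} {n : ℕ} {v : Fin (n + 1) → ℤ × ℤ}
    (hS : S ⊆ ({(1, -1), (-1, 1), (1, 0), (0, 1), (1, 1)} : Finset (ℤ × ℤ)))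
    (hv : v ∈ quadWalks S (n + 1)) :
    ¬((endpt v).1 = 0 ∧ (endpt v).2 = 0) := by
  rw [← Fin.snoc_init_self v] at hv
  rw [mem_quadWalks_snoc] at hv
  obtain ⟨hw, hs, _, _⟩ := hv
  have hnn := endpt_nonneg hw
  have hs5 := hS hs
  rw [← Fin.snoc_init_self v, endpt_snoc]
  simp only [Finset.mem_insert, Finset.mem_singleton] at hs5
  set e := endpt (Fin.init v)
  set s := v (Fin.last n)
  rcases hs5 with h | h | h | h | h <;> rw [h] <;> simp only [Prod.fst_add, Prod.snd_add] <;>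
    rintro ⟨h1, h2⟩ <;> omega

section CoeffLemmas
open MvPolynomial
variable (S : Finset (ℤ × ℤ)) (d : ℤ × ℤ → ℝ) (a b : ℝ)

/-- Coefficient of `t^n` in `Q`. -/
def Qc (n : ℕ) : MvPolynomial (Fin 2) ℝ :=
  ∑ v ∈ quadWalks S n,
    C (wt d a b v) * X 0 ^ (endpt v).1.toNat * X 1 ^ (endpt v).2.toNat

/-- Coefficient of `t^n` in `Q(x,0)`. -/
def Qxc (n : ℕ) : MvPolynomial (Fin 2) ℝ :=
  ∑ v ∈ (quadWalks S n).filter (fun v => (endpt v).2 = 0),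
    C (wt d a b v) * X 0 ^ (endpt v).1.toNat

/-- Coefficient of `t^n` in `Q(0,y)`. -/
def Qyc (n : ℕ) : MvPolynomial (Fin 2) ℝ :=
  ∑ v ∈ (quadWalks S n).filter (fun v => (endpt v).1 = 0),
    C (wt d a b v) * X 1 ^ (endpt v).2.toNat

/-- Sum over valid (walk, step) pairs. -/
def PairSum (n : ℕ) : MvPolynomial (Fin 2) ℝ :=
  ∑ p ∈ pairs S n,
    C (wt d a b p.1 * d p.2) * X 0 ^ ((endpt p.1 + p.2).1.toNat + 1) *
      X 1 ^ ((endpt p.1 + p.2).2.toNat + 1)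

lemma lhs_eq (hS : S ⊆ ({(1, -1), (-1, 1), (1, 0), (0, 1), (1, 1)} : Finset (ℤ × ℤ)))
    (ha : a ≠ 0) (hb : b ≠ 0) (n : ℕ) :
    X 0 * X 1 * Qc S d a b (n + 1)
      - C (1 - 1/a) * X 0 * X 1 * Qxc S d a b (n + 1)
      - C (1 - 1/b) * X 0 * X 1 * Qyc S d a b (n + 1)
      = PairSum S d a b n := by
  have hCa : (C a⁻¹ : MvPolynomial (Fin 2) ℝ) = 1 - C (1 - 1/a) := by
    rw [show (a⁻¹ : ℝ) = 1 - (1 - 1/a) by ring, map_sub, map_one]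
  have hCb : (C b⁻¹ : MvPolynomial (Fin 2) ℝ) = 1 - C (1 - 1/b) := by
    rw [show (b⁻¹ : ℝ) = 1 - (1 - 1/b) by ring, map_sub, map_one]
  calc X 0 * X 1 * Qc S d a b (n + 1)
      - C (1 - 1/a) * X 0 * X 1 * Qxc S d a b (n + 1)
      - C (1 - 1/b) * X 0 * X 1 * Qyc S d a b (n + 1)
      = ∑ v ∈ quadWalks S (n + 1),
          C (wt d a b v * ((if (endpt v).2 = 0 then a⁻¹ else 1) *
              (if (endpt v).1 = 0 then b⁻¹ else 1))) *
            X 0 ^ ((endpt v).1.toNat + 1) * X 1 ^ ((endpt v).2.toNat + 1) := by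
        rw [Qc, Qxc, Qyc, Finset.mul_sum, Finset.mul_sum, Finset.mul_sum,
          Finset.sum_filter, Finset.sum_filter, ← Finset.sum_sub_distrib,
          ← Finset.sum_sub_distrib]
        refine Finset.sum_congr rfl fun v hv => ?_
        have hne := endpt_ne_zero hS hv
        by_cases hj : (endpt v).2 = 0 <;> by_cases hi : (endpt v).1 = 0
        · exact absurd ⟨hi, hj⟩ hne
        · simp only [hj, if_pos rfl, if_neg hi, if_true, Int.toNat_zero, pow_zero, mul_one,
            zero_add, pow_one, sub_zero]
          rw [map_mul, hCa]; ring
        · simp only [hi, if_pos rfl, if_neg hj, if_true, Int.toNat_zero, pow_zero, mul_one,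
            one_mul, zero_add, pow_one, sub_zero]
          rw [map_mul, hCb]; ring
        · simp only [if_neg hi, if_neg hj, mul_one, sub_zero]
          ring
    _ = PairSum S d a b n := by
        rw [PairSum, sum_snoc_decomp]
        refine Finset.sum_congr rfl fun p hp => ?_
        simp only [pairs, Finset.mem_filter, Finset.mem_product] at hp
        rw [wt_snoc, endpt_snoc]
        have : wt d a b p.1 * d p.2 * (if (endpt p.1 + p.2).2 = 0 then a else 1) *
              (if (endpt p.1 + p.2).1 = 0 then b else 1) *
              ((if (endpt p.1 + p.2).2 = 0 then a⁻¹ else 1) *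
                (if (endpt p.1 + p.2).1 = 0 then b⁻¹ else 1))
            = wt d a b p.1 * d p.2 := by
          split_ifs <;> field_simp <;> ring
        rw [this]

lemma per_point (e : ℤ × ℤ) (h1 : 0 ≤ e.1) (h2 : 0 ≤ e.2) (w d1 d2 d3 d4 d5 : ℝ) :
    (C d1 * X 0 ^ 2 + C d2 * X 1 ^ 2 + C d3 * X 0 ^ 2 * X 1 + C d4 * X 0 * X 1 ^ 2
        + C d5 * X 0 ^ 2 * X 1 ^ 2) *
      (C w * X 0 ^ e.1.toNat * X 1 ^ e.2.toNat)
      - (if e.2 = 0 then C d1 * X 0 ^ 2 * (C w * X 0 ^ e.1.toNat) else 0)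
      - (if e.1 = 0 then C d2 * X 1 ^ 2 * (C w * X 1 ^ e.2.toNat) else 0)
    = (if 0 ≤ (e + (1, -1)).1 ∧ 0 ≤ (e + (1, -1)).2 then
        (C (w * d1) : MvPolynomial (Fin 2) ℝ) * X 0 ^ ((e + (1, -1)).1.toNat + 1) *
          X 1 ^ ((e + (1, -1)).2.toNat + 1) else 0)
      + ((if 0 ≤ (e + (-1, 1)).1 ∧ 0 ≤ (e + (-1, 1)).2 then
        (C (w * d2) : MvPolynomial (Fin 2) ℝ) * X 0 ^ ((e + (-1, 1)).1.toNat + 1) *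
          X 1 ^ ((e + (-1, 1)).2.toNat + 1) else 0)
      + ((if 0 ≤ (e + (1, 0)).1 ∧ 0 ≤ (e + (1, 0)).2 then
        (C (w * d3) : MvPolynomial (Fin 2) ℝ) * X 0 ^ ((e + (1, 0)).1.toNat + 1) *
          X 1 ^ ((e + (1, 0)).2.toNat + 1) else 0)
      + ((if 0 ≤ (e + (0, 1)).1 ∧ 0 ≤ (e + (0, 1)).2 then
        (C (w * d4) : MvPolynomial (Fin 2) ℝ) * X 0 ^ ((e + (0, 1)).1.toNat + 1) *
          X 1 ^ ((e + (0, 1)).2.toNat + 1) else 0)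
      + (if 0 ≤ (e + (1, 1)).1 ∧ 0 ≤ (e + (1, 1)).2 then
        (C (w * d5) : MvPolynomial (Fin 2) ℝ) * X 0 ^ ((e + (1, 1)).1.toNat + 1) *
          X 1 ^ ((e + (1, 1)).2.toNat + 1) else 0)))) := by
  obtain ⟨i, j⟩ := e
  simp only [Prod.fst_add, Prod.snd_add, Prod.fst, Prod.snd] at *
  have c3 : (0 ≤ i + 1 ∧ 0 ≤ j + 0) := by omega
  have c4 : (0 ≤ i + 0 ∧ 0 ≤ j + 1) := by omega
  have c5 : (0 ≤ i + 1 ∧ 0 ≤ j + 1) := by omega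
  rw [if_pos c3, if_pos c4, if_pos c5]
  have e1 : (i + 1).toNat = i.toNat + 1 := by omega
  have e2 : (j + 1).toNat = j.toNat + 1 := by omega
  have e3 : (i + 0).toNat = i.toNat := by omega
  have e4 : (j + 0).toNat = j.toNat := by omega
  rw [e1, e2, e3, e4]
  by_cases hj : j = 0 <;> by_cases hi : i = 0
  · rw [if_pos hj, if_pos hi, if_neg (by omega), if_neg (by omega), hi, hj]
    simp only [Int.toNat_zero, pow_zero, map_mul]
    ring
  · rw [if_pos hj, if_neg hi, if_neg (by omega),
      if_pos (⟨by omega, by omega⟩ : 0 ≤ i + -1 ∧ 0 ≤ j + 1)]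
    have e5 : (i + -1).toNat + 1 = i.toNat := by omega
    rw [e5, hj]
    simp only [Int.toNat_zero, pow_zero, map_mul]
    ring
  · rw [if_neg hj, if_pos hi, if_pos (⟨by omega, by omega⟩ : 0 ≤ i + 1 ∧ 0 ≤ j + -1),
      if_neg (by omega)]
    have e5 : (j + -1).toNat + 1 = j.toNat := by omega
    rw [e5, hi]
    simp only [Int.toNat_zero, pow_zero, map_mul]
    ring
  · rw [if_neg hj, if_neg hi, if_pos (⟨by omega, by omega⟩ : 0 ≤ i + 1 ∧ 0 ≤ j + -1),
      if_pos (⟨by omega, by omega⟩ : 0 ≤ i + -1 ∧ 0 ≤ j + 1)]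
    have e5 : (j + -1).toNat + 1 = j.toNat := by omega
    have e6 : (i + -1).toNat + 1 = i.toNat := by omega
    rw [e5, e6]
    simp only [map_mul]
    ring

lemma rhs_eq (hS : S ⊆ ({(1, -1), (-1, 1), (1, 0), (0, 1), (1, 1)} : Finset (ℤ × ℤ)))
    (hd0 : ∀ v ∉ S, d v = 0) (n : ℕ) :
    (C (d (1, -1)) * X 0 ^ 2 + C (d (-1, 1)) * X 1 ^ 2 + C (d (1, 0)) * X 0 ^ 2 * X 1
        + C (d (0, 1)) * X 0 * X 1 ^ 2 + C (d (1, 1)) * X 0 ^ 2 * X 1 ^ 2) * Qc S d a b n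
      - C (d (1, -1)) * X 0 ^ 2 * Qxc S d a b n
      - C (d (-1, 1)) * X 1 ^ 2 * Qyc S d a b n
    = PairSum S d a b n := by
  rw [PairSum, pairs, Finset.sum_filter, Finset.sum_product,
    Qc, Qxc, Qyc, Finset.mul_sum, Finset.mul_sum, Finset.mul_sum,
    Finset.sum_filter, Finset.sum_filter, ← Finset.sum_sub_distrib, ← Finset.sum_sub_distrib]
  refine Finset.sum_congr rfl fun w hw => ?_
  have hnn := endpt_nonneg hw
  rw [Finset.sum_subset hS (fun s _ hs => by rw [hd0 s hs]; simp)]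
  rw [show ({(1, -1), (-1, 1), (1, 0), (0, 1), (1, 1)} : Finset (ℤ × ℤ))
      = insert (1, -1) (insert (-1, 1) (insert (1, 0) (insert (0, 1) {(1, 1)}))) from rfl,
    Finset.sum_insert (by decide), Finset.sum_insert (by decide),
    Finset.sum_insert (by decide), Finset.sum_insert (by decide), Finset.sum_singleton]
  exact per_point (endpt w) hnn.1 hnn.2 (wt d a b w) _ _ _ _ _

lemma quadWalks_zero : quadWalks S 0 = {fun i => i.elim0} := by
  ext f
  simp only [quadWalks, Finset.mem_filter, Fintype.mem_piFinset, Finset.mem_singleton]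
  constructor
  · intro _; exact funext fun i => i.elim0
  · intro _; exact ⟨fun i => i.elim0, fun i => i.elim0⟩

lemma wt_zero : wt d a b (fun i => i.elim0) = 1 := by
  simp [wt]

lemma endpt_zero : endpt (fun i : Fin 0 => i.elim0) = 0 := by
  simp [endpt]

lemma Qc_zero : Qc S d a b 0 = 1 := by
  rw [Qc, quadWalks_zero, Finset.sum_singleton, wt_zero, endpt_zero]
  simp

lemma Qxc_zero : Qxc S d a b 0 = 1 := by
  rw [Qxc, quadWalks_zero]
  rw [Finset.filter_singleton, if_pos (by rw [endpt_zero]; rfl)]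
  rw [Finset.sum_singleton, wt_zero, endpt_zero]
  simp

lemma Qyc_zero : Qyc S d a b 0 = 1 := by
  rw [Qyc, quadWalks_zero]
  rw [Finset.filter_singleton, if_pos (by rw [endpt_zero]; rfl)]
  rw [Finset.sum_singleton, wt_zero, endpt_zero]
  simp

lemma main_eq (hS : S ⊆ ({(1, -1), (-1, 1), (1, 0), (0, 1), (1, 1)} : Finset (ℤ × ℤ)))
    (hd0 : ∀ v ∉ S, d v = 0) (ha : a ≠ 0) (hb : b ≠ 0) (n : ℕ) :
    X 0 * X 1 * Qc S d a b (n + 1)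
      - (C (d (1, -1)) * X 0 ^ 2 + C (d (-1, 1)) * X 1 ^ 2 + C (d (1, 0)) * X 0 ^ 2 * X 1
        + C (d (0, 1)) * X 0 * X 1 ^ 2 + C (d (1, 1)) * X 0 ^ 2 * X 1 ^ 2) * Qc S d a b n
    = C (1 - 1/a) * X 0 * X 1 * Qxc S d a b (n + 1)
      - C (d (1, -1)) * X 0 ^ 2 * Qxc S d a b n
      + (C (1 - 1/b) * X 0 * X 1 * Qyc S d a b (n + 1)
      - C (d (-1, 1)) * X 1 ^ 2 * Qyc S d a b n) := by
  linear_combination lhs_eq S d a b hS ha hb n - rhs_eq S d a b hS hd0 n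

end CoeffLemmas

lemma coeff_Q (S : Finset (ℤ × ℤ)) (d : ℤ × ℤ → ℝ) (a b : ℝ) (n : ℕ) :
    PowerSeries.coeff n (Q S d a b) = Qc S d a b n := by
  rw [Q, PowerSeries.coeff_mk]; rfl

lemma coeff_Qx0 (S : Finset (ℤ × ℤ)) (d : ℤ × ℤ → ℝ) (a b : ℝ) (n : ℕ) :
    PowerSeries.coeff n (Qx0 S d a b) = Qxc S d a b n := by
  rw [Qx0, PowerSeries.coeff_mk]; rfl

lemma coeff_Qy0 (S : Finset (ℤ × ℤ)) (d : ℤ × ℤ → ℝ) (a b : ℝ) (n : ℕ) :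
    PowerSeries.coeff n (Qy0 S d a b) = Qyc S d a b n := by
  rw [Qy0, PowerSeries.coeff_mk]; rfl


theorem statement2 (S : Finset (ℤ × ℤ)) (d : ℤ × ℤ → ℝ) (a b : ℝ)
    (hS : S ⊆ ({(1, -1), (-1, 1), (1, 0), (0, 1), (1, 1)} : Finset (ℤ × ℤ)))
    (hpm : (1, -1) ∈ S) (hmp : (-1, 1) ∈ S)
    (hd : ∀ v ∈ S, 0 < d v) (hd0 : ∀ v ∉ S, d v = 0)
    (ha : 0 < a) (hb : 0 < b) :
    (Xv * Yv
        - T * (CC (d (1, -1)) * Xv ^ 2 + CC (d (-1, 1)) * Yv ^ 2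
            + CC (d (1, 0)) * Xv ^ 2 * Yv + CC (d (0, 1)) * Xv * Yv ^ 2
            + CC (d (1, 1)) * Xv ^ 2 * Yv ^ 2)) * Q S d a b
      = CC (1 - (1 - 1 / a) - (1 - 1 / b)) * Xv * Yv
        + (CC (1 - 1 / a) * Xv * Yv - T * CC (d (1, -1)) * Xv ^ 2) * Qx0 S d a b
        + (CC (1 - 1 / b) * Xv * Yv - T * CC (d (-1, 1)) * Yv ^ 2) * Qy0 S d a b := by
  apply PowerSeries.ext
  intro n
  simp only [CC, Xv, Yv, T, sub_mul, add_mul, mul_assoc, ← map_pow, ← map_mul]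
  cases n with
  | zero =>
    simp only [map_sub, map_add, PowerSeries.coeff_C_mul, PowerSeries.coeff_zero_X_mul,
      coeff_Q, coeff_Qx0, coeff_Qy0, Qc_zero, Qxc_zero, Qyc_zero, PowerSeries.coeff_zero_C,
      mul_one, sub_zero]
    simp only [map_sub, MvPolynomial.C_1]
    ring
  | succ m =>
    simp only [map_sub, map_add, PowerSeries.coeff_C_mul, PowerSeries.coeff_succ_X_mul,
      coeff_Q, coeff_Qx0, coeff_Qy0, PowerSeries.coeff_C, Nat.succ_ne_zero, if_false,
      map_add, PowerSeries.coeff_C_mul, coeff_Q, coeff_Qx0, coeff_Qy0]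
    have h := main_eq S d a b hS hd0 (ne_of_gt ha) (ne_of_gt hb) m
    simp only [map_sub, MvPolynomial.C_1] at h ⊢
    linear_combination h


end Stmt2
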